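/- Let f ∈ K[x₁,…,xₙ] be nonzero, α ∈ K^{n−1}, and αₙ ∈ K arbitrary. The integers v₁,…,v_{n−1} produced by the Lazard evaluation of f at α coincide with the first n−1 coordinates of the Lazard valuation v_{(α,αₙ)}(f). -/

import Mathlib

open MvPolynomial Polynomial

/-- The Lazard valuation of a polynomial `f` at a point `α`: the lexicographically
least exponent vector occurring in the expansion of `f` about `α`. -/
noncomputable def lazardVal {K : Type*} [CommRing K] {n : ℕ}
    (α : Fin n → K) (f : MvPolynomial (Fin n) K) : Lex (Fin n →₀ ℕ) :=
  WithTop.untopD (toLex 0) (((MvPolynomial.bind₁ (fun i => X i + MvPolynomial.C (α i)) f).support.image toLex).min)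

/-- One step of the Lazard evaluation process: view `f` as a polynomial in the first
variable, divide out the highest power of `(x₀ - a)` dividing it, then substitute
`x₀ = a`. -/
noncomputable def lazardStep {K : Type*} [Field K] {n : ℕ} (a : K)
    (f : MvPolynomial (Fin (n + 1)) K) : MvPolynomial (Fin n) K :=
  Polynomial.eval (MvPolynomial.C a)
    ((MvPolynomial.finSuccEquiv K n f) /ₘ
      ((Polynomial.X - Polynomial.C (MvPolynomial.C a)) ^
        ((MvPolynomial.finSuccEquiv K n f).rootMultiplicity (MvPolynomial.C a))))

/-- The exponents `v₁,…,vₙ` produced by the Lazard evaluation process. -/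
noncomputable def lazardExps {K : Type*} [Field K] :
    {n : ℕ} → MvPolynomial (Fin (n + 1)) K → (Fin n → K) → (Fin n → ℕ)
  | 0, _, _ => fun i => i.elim0
  | _ + 1, f, α =>
      Fin.cons ((MvPolynomial.finSuccEquiv K _ f).rootMultiplicity (MvPolynomial.C (α 0)))
        (lazardExps (lazardStep (α 0) f) (Fin.tail α))

section LexLemmas

variable {m : ℕ}

lemma lex_lt_iff' {x y : Fin m →₀ ℕ} :
    toLex x < toLex y ↔ ∃ j, (∀ d, d < j → x d = y d) ∧ x j < y j :=
  Finsupp.lex_def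

lemma cons_lt_cons_iff {c c' : ℕ} {x y : Fin m →₀ ℕ} :
    toLex (Finsupp.cons c x) < toLex (Finsupp.cons c' y) ↔
      c < c' ∨ (c = c' ∧ toLex x < toLex y) := by
  constructor
  · rintro h
    obtain ⟨j, hj, hlt⟩ := lex_lt_iff'.mp h
    rcases Fin.eq_zero_or_eq_succ j with rfl | ⟨k, rfl⟩
    · left; simpa using hlt
    · right
      refine ⟨by simpa using hj 0 (Fin.succ_pos k),
        lex_lt_iff'.mpr ⟨k, fun d hd => ?_, by simpa using hlt⟩⟩
      have := hj d.succ (by rwa [Fin.succ_lt_succ_iff])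
      simpa using this
  · rintro (hc | ⟨rfl, hxy⟩)
    · exact lex_lt_iff'.mpr ⟨0, fun d hd => absurd hd (Fin.not_lt_zero d), by simpa using hc⟩
    · obtain ⟨k, hk, hlt⟩ := lex_lt_iff'.mp hxy
      refine lex_lt_iff'.mpr ⟨k.succ, fun d hd => ?_, by simpa using hlt⟩
      rcases Fin.eq_zero_or_eq_succ d with rfl | ⟨e, rfl⟩
      · simp
      · have := hk e (by rwa [← Fin.succ_lt_succ_iff])
        simpa using this

lemma cons_le_cons_iff {c : ℕ} {x y : Fin m →₀ ℕ} :
    toLex (Finsupp.cons c x) ≤ toLex (Finsupp.cons c y) ↔ toLex x ≤ toLex y := by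
  constructor
  · intro h
    rcases h.lt_or_eq with h | h
    · rcases cons_lt_cons_iff.mp h with h | ⟨-, h⟩
      · exact absurd h (lt_irrefl c)
      · exact h.le
    · have : Finsupp.cons c x = Finsupp.cons c y := toLex_inj.mp h
      have hx : x = y := by
        have := congrArg Finsupp.tail this
        rwa [Finsupp.tail_cons, Finsupp.tail_cons] at this
      exact le_of_eq (by rw [hx])
  · intro h
    rcases h.lt_or_eq with h | h
    · exact (cons_lt_cons_iff.mpr (Or.inr ⟨rfl, h⟩)).le
    · exact le_of_eq (by rw [toLex_inj.mp h])

end LexLemmas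

/-- The minimal (in lex order) exponent vector of a multivariate polynomial. -/
noncomputable def rawMin {R : Type*} [CommSemiring R] {m : ℕ}
    (g : MvPolynomial (Fin m) R) : Lex (Fin m →₀ ℕ) :=
  WithTop.untopD (toLex 0) ((g.support.image toLex).min)

lemma rawMin_eq {R : Type*} [CommSemiring R] {m : ℕ} {g : MvPolynomial (Fin m) R}
    {d : Fin m →₀ ℕ} (hd : d ∈ g.support) (hmin : ∀ e ∈ g.support, toLex d ≤ toLex e) :
    rawMin g = toLex d := by
  have hne : (g.support.image toLex).Nonempty := ⟨toLex d, Finset.mem_image_of_mem _ hd⟩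
  rw [rawMin, ← Finset.coe_min' hne, WithTop.untopD_coe]
  refine le_antisymm (Finset.min'_le _ _ (Finset.mem_image_of_mem _ hd)) (Finset.le_min' _ _ _ ?_)
  rintro y hy
  obtain ⟨e, he, rfl⟩ := Finset.mem_image.mp hy
  exact hmin e he

lemma rawMin_spec {R : Type*} [CommSemiring R] {m : ℕ} {g : MvPolynomial (Fin m) R}
    (hg : g ≠ 0) :
    ofLex (rawMin g) ∈ g.support ∧ ∀ e ∈ g.support, rawMin g ≤ toLex e := by
  have hs : g.support.Nonempty := MvPolynomial.support_nonempty.mpr hg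
  have hne : (g.support.image toLex).Nonempty := hs.image _
  obtain ⟨e, he, hEq⟩ := Finset.mem_image.mp (Finset.min'_mem _ hne)
  have hr : rawMin g = toLex e := by
    rw [rawMin, ← Finset.coe_min' hne, WithTop.untopD_coe, hEq]
  constructor
  · rw [hr]; exact he
  · intro e' he'
    rw [rawMin, ← Finset.coe_min' hne, WithTop.untopD_coe]
    exact Finset.min'_le _ _ (Finset.mem_image_of_mem _ he')

lemma rawMin_eq_cons {K : Type*} [CommRing K] {n : ℕ} {g : MvPolynomial (Fin (n + 1)) K}
    (hg : g ≠ 0) :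
    rawMin g = toLex (Finsupp.cons ((MvPolynomial.finSuccEquiv K n g).natTrailingDegree)
      (ofLex (rawMin ((MvPolynomial.finSuccEquiv K n g).coeff
        ((MvPolynomial.finSuccEquiv K n g).natTrailingDegree))))) := by
  set G := MvPolynomial.finSuccEquiv K n g with hG
  set t := G.natTrailingDegree with ht
  set h := G.coeff t with hh
  have hGne : G ≠ 0 := by
    simp only [hG, Ne, EmbeddingLike.map_eq_zero_iff]
    exact hg
  have hhne : h ≠ 0 := trailingCoeff_nonzero_iff_nonzero.mpr hGne
  obtain ⟨hmem, hmin⟩ := rawMin_spec hhne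
  set d := ofLex (rawMin h) with hd
  apply rawMin_eq
  · rw [MvPolynomial.mem_support_iff]
    have : MvPolynomial.coeff (Finsupp.cons t d) g = MvPolynomial.coeff d h := by
      rw [hh, hG, finSuccEquiv_coeff_coeff]
    rw [this]
    exact MvPolynomial.mem_support_iff.mp hmem
  · intro e he
    have he' : MvPolynomial.coeff (Finsupp.tail e) (G.coeff (e 0)) ≠ 0 := by
      rw [hG, finSuccEquiv_coeff_coeff, Finsupp.cons_tail]
      exact MvPolynomial.mem_support_iff.mp he
    have hc : G.coeff (e 0) ≠ 0 := fun H => he' (by rw [H]; simp)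
    have h1 : t ≤ e 0 := natTrailingDegree_le_of_ne_zero hc
    have hce : Finsupp.cons (e 0) (Finsupp.tail e) = e := Finsupp.cons_tail e
    rcases h1.lt_or_eq with h1 | h1
    · calc toLex (Finsupp.cons t d) ≤ toLex (Finsupp.cons (e 0) (Finsupp.tail e)) :=
            (cons_lt_cons_iff.mpr (Or.inl h1)).le
        _ = toLex e := by rw [hce]
    · have hte : Finsupp.tail e ∈ h.support := by
        rw [MvPolynomial.mem_support_iff, hh, h1]
        exact he'
      have := hmin _ hte
      calc toLex (Finsupp.cons t d) ≤ toLex (Finsupp.cons t (Finsupp.tail e)) :=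
            cons_le_cons_iff.mpr this
        _ = toLex e := by rw [h1, hce]

lemma natTrailingDegree_map_inj {R S : Type*} [Semiring R] [Semiring S] {σ : R →+* S}
    (hσ : Function.Injective σ) (P : R[X]) :
    (P.map σ).natTrailingDegree = P.natTrailingDegree := by
  by_cases hP : P = 0
  · simp [hP]
  have hm : P.map σ ≠ 0 := by
    simpa [Polynomial.map_eq_zero_iff hσ] using hP
  have key : ∀ i, (P.map σ).coeff i ≠ 0 ↔ P.coeff i ≠ 0 := by
    intro i
    rw [Polynomial.coeff_map]
    constructor
    · intro h hc; exact h (by rw [hc, map_zero])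
    · intro h hc; exact h (hσ (by rwa [map_zero]))
  refine le_antisymm (natTrailingDegree_le_of_ne_zero ((key _).mpr ?_))
    (natTrailingDegree_le_of_ne_zero ((key _).mp ?_))
  · exact trailingCoeff_nonzero_iff_nonzero.mpr hP
  · exact trailingCoeff_nonzero_iff_nonzero.mpr hm

lemma trailingCoeff_map_inj {R S : Type*} [Semiring R] [Semiring S] {σ : R →+* S}
    (hσ : Function.Injective σ) (P : R[X]) :
    (P.map σ).trailingCoeff = σ P.trailingCoeff := by
  rw [trailingCoeff, trailingCoeff, natTrailingDegree_map_inj hσ, Polynomial.coeff_map]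

lemma finSuccEquiv_C' {K : Type*} [CommRing K] {n : ℕ} (a : K) :
    MvPolynomial.finSuccEquiv K n (MvPolynomial.C a) = Polynomial.C (MvPolynomial.C a) := by
  simp [finSuccEquiv_apply]

lemma bind₁_shift_injective {K : Type*} [CommRing K] {m : ℕ} (p : Fin m → K) :
    Function.Injective (bind₁ (fun i => X i + MvPolynomial.C (p i)) :
      MvPolynomial (Fin m) K →ₐ[K] MvPolynomial (Fin m) K) := by
  have key : ∀ f : MvPolynomial (Fin m) K,
      bind₁ (fun i => X i - MvPolynomial.C (p i))
        (bind₁ (fun i => X i + MvPolynomial.C (p i)) f) = f := by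
    intro f
    rw [bind₁_bind₁]
    have : (fun i => bind₁ (fun i => X i - MvPolynomial.C (p i))
        (X i + MvPolynomial.C (p i))) = (X : Fin m → MvPolynomial (Fin m) K) := by
      funext i
      simp [bind₁_X_right]
    rw [this, bind₁_X_left]
    rfl
  intro a b hab
  rw [← key a, ← key b, hab]

lemma finSuccEquiv_bind₁_shift {K : Type*} [CommRing K] {n : ℕ} (p : Fin (n + 1) → K)
    (f : MvPolynomial (Fin (n + 1)) K) :
    MvPolynomial.finSuccEquiv K n (bind₁ (fun i => X i + MvPolynomial.C (p i)) f)
      = Polynomial.map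
          (↑(bind₁ (fun i => X i + MvPolynomial.C (p i.succ)) :
            MvPolynomial (Fin n) K →ₐ[K] MvPolynomial (Fin n) K) : _ →+* _)
          (((MvPolynomial.finSuccEquiv K n) f).comp
            (Polynomial.X + Polynomial.C (MvPolynomial.C (p 0)))) := by
  induction f using MvPolynomial.induction_on with
  | C a =>
      simp [finSuccEquiv_apply, algHom_C, Polynomial.C_comp]
  | add f g hf hg =>
      simp only [map_add, Polynomial.add_comp, Polynomial.map_add, hf, hg]
  | mul_X f i hf =>
      rw [map_mul, map_mul, map_mul, Polynomial.mul_comp, Polynomial.map_mul, hf]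
      refine congrArg₂ (· * ·) rfl ?_
      refine Fin.cases ?_ ?_ i
      · rw [bind₁_X_right, finSuccEquiv_X_zero, map_add, finSuccEquiv_X_zero]
        simp [Polynomial.X_comp, Polynomial.add_comp, Polynomial.C_comp, algHom_C,
          finSuccEquiv_C']
      · intro k
        rw [bind₁_X_right, finSuccEquiv_X_succ, map_add, finSuccEquiv_X_succ]
        simp [Polynomial.C_comp, algHom_C, bind₁_X_right, finSuccEquiv_C']

lemma lazardVal_cons {K : Type*} [Field K] {n : ℕ} (f : MvPolynomial (Fin (n + 1)) K)
    (hf : f ≠ 0) (p : Fin (n + 1) → K) :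
    lazardVal p f = toLex (Finsupp.cons
      ((MvPolynomial.finSuccEquiv K n f).rootMultiplicity (MvPolynomial.C (p 0)))
      (ofLex (lazardVal (fun i => p i.succ) (lazardStep (p 0) f)))) := by
  set Sβ := (bind₁ (fun i => X i + MvPolynomial.C (p i.succ)) :
    MvPolynomial (Fin n) K →ₐ[K] MvPolynomial (Fin n) K) with hSβ
  set g := bind₁ (fun i => X i + MvPolynomial.C (p i)) f with hg
  have hval : lazardVal p f = rawMin g := rfl
  have hval2 : lazardVal (fun i => p i.succ) (lazardStep (p 0) f)
      = rawMin (Sβ (lazardStep (p 0) f)) := rfl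
  have hgne : g ≠ 0 := by
    intro H
    exact hf (bind₁_shift_injective p (by rw [map_zero]; exact H))
  have hφf : MvPolynomial.finSuccEquiv K n f ≠ 0 := by
    simp only [Ne, EmbeddingLike.map_eq_zero_iff]
    exact hf
  set P := ((MvPolynomial.finSuccEquiv K n) f).comp
    (Polynomial.X + Polynomial.C (MvPolynomial.C (p 0))) with hP
  have hcomm : MvPolynomial.finSuccEquiv K n g = Polynomial.map (↑Sβ : _ →+* _) P :=
    finSuccEquiv_bind₁_shift p f
  have hinj : Function.Injective (↑Sβ : MvPolynomial (Fin n) K →+* MvPolynomial (Fin n) K) :=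
    bind₁_shift_injective _
  have h1 : (MvPolynomial.finSuccEquiv K n f).rootMultiplicity (MvPolynomial.C (p 0))
      = P.natTrailingDegree := rootMultiplicity_eq_natTrailingDegree
  have h2 : (MvPolynomial.finSuccEquiv K n g).natTrailingDegree = P.natTrailingDegree := by
    rw [hcomm, natTrailingDegree_map_inj hinj]
  have h3 : lazardStep (p 0) f = P.trailingCoeff := by
    rw [lazardStep]
    exact eval_divByMonic_eq_trailingCoeff_comp
  have h4 : (MvPolynomial.finSuccEquiv K n g).coeff
      ((MvPolynomial.finSuccEquiv K n g).natTrailingDegree) = Sβ P.trailingCoeff := by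
    rw [hcomm]
    exact trailingCoeff_map_inj hinj P
  rw [hval, rawMin_eq_cons hgne, h4, h2, ← h1, hval2, h3]

/-- The exponents produced by the Lazard evaluation of `f` at `α ∈ Kⁿ` coincide with
the first `n` coordinates of the Lazard valuation of `f` at `(α, αₙ)`, for any
`αₙ ∈ K`. -/
theorem lazardExps_eq_lazardVal {K : Type*} [Field K] {n : ℕ}
    (f : MvPolynomial (Fin (n + 1)) K) (hf : f ≠ 0) (α : Fin n → K) (αn : K) :
    ∀ i : Fin n,
      lazardExps f α i = ofLex (lazardVal (Fin.snoc α αn) f) (Fin.castSucc i) := by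
  induction n with
  | zero => exact fun i => i.elim0
  | succ m ih =>
    intro i
    have hcore := lazardVal_cons f hf (Fin.snoc α αn)
    have hp0 : (Fin.snoc α αn : Fin (m + 2) → K) 0 = α 0 := by
      rw [show (0 : Fin (m + 2)) = Fin.castSucc 0 from rfl, Fin.snoc_castSucc]
    have hpsucc : (fun j : Fin (m + 1) => (Fin.snoc α αn : Fin (m + 2) → K) j.succ)
        = Fin.snoc (Fin.tail α) αn := by
      funext j
      refine Fin.lastCases ?_ ?_ j
      · rw [Fin.succ_last, Fin.snoc_last, Fin.snoc_last]
      · intro k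
        rw [Fin.succ_castSucc, Fin.snoc_castSucc, Fin.snoc_castSucc]
        rfl
    have hstep : lazardStep (α 0) f ≠ 0 := by
      rw [lazardStep]
      apply eval_divByMonic_pow_rootMultiplicity_ne_zero
      simp only [Ne, EmbeddingLike.map_eq_zero_iff]
      exact hf
    rw [hp0, hpsucc] at hcore
    refine Fin.cases ?_ ?_ i
    · rw [hcore, lazardExps]
      simp [Finsupp.cons_zero]
    · intro k
      rw [hcore,
        show Fin.castSucc k.succ = (Fin.castSucc k).succ from (Fin.succ_castSucc k).symm]
      rw [lazardExps]
      simp only [Fin.cons_succ, ofLex_toLex, Finsupp.cons_succ]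
      exact ih (lazardStep (α 0) f) hstep (Fin.tail α) k
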